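/- Let k ≥ 2 and let C be a Type II Z_{2k}-code of length n. Let w ∈ (Z/2k)^n \ C be a vector every coordinate of which equals 0 or k, such that: if k is odd then n_k(w) is divisible by 4, and if k is even but not divisible by 4 then n_k(w) is even. Set C_0 = {v ∈ C : ⟨w,v⟩ = 0}. Then the subgroup C̃ = C_0 + ⟨w⟩ of (Z/2k)^n is a Type II Z_{2k}-code of length n, i.e., C̃ is self-dual and every codeword of C̃ has Euclidean weight divisible by 4k. -/

import Mathlib

open Finset

/-- Inner product of two vectors over `ZMod N`. -/
def innerZ {N n : ℕ} (x y : Fin n → ZMod N) : ZMod N := ∑ i, x i * y i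

/-- Euclidean weight of a vector over `ZMod N`. -/
def euclWt {N n : ℕ} (x : Fin n → ZMod N) : ℕ :=
  ∑ i, min ((x i).val ^ 2) ((N - (x i).val) ^ 2)

/-- Number of coordinates of `x` equal to `a`. -/
def cntEq {N n : ℕ} (a : ZMod N) (x : Fin n → ZMod N) : ℕ :=
  (Finset.univ.filter fun j => x j = a).card

/-- A code is self-dual if it equals its dual. -/
def IsSelfDual {N n : ℕ} (C : AddSubgroup (Fin n → ZMod N)) : Prop :=
  ∀ x, x ∈ C ↔ ∀ y ∈ C, innerZ x y = 0

/-- The subcode `{v ∈ C : ⟨w, v⟩ = 0}`. -/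
def evenPart {N n : ℕ} (C : AddSubgroup (Fin n → ZMod N)) (w : Fin n → ZMod N) :
    AddSubgroup (Fin n → ZMod N) where
  carrier := {v | v ∈ C ∧ innerZ w v = 0}
  zero_mem' := ⟨C.zero_mem, by simp [innerZ]⟩
  add_mem' := by
    rintro a b ⟨ha, ha0⟩ ⟨hb, hb0⟩
    refine ⟨C.add_mem ha hb, ?_⟩
    have h : innerZ w (a + b) = innerZ w a + innerZ w b := by
      simp [innerZ, mul_add, Finset.sum_add_distrib]
    rw [h, ha0, hb0, add_zero]
  neg_mem' := by
    rintro a ⟨ha, ha0⟩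
    refine ⟨C.neg_mem ha, ?_⟩
    have h : innerZ w (-a) = - innerZ w a := by
      simp [innerZ]
    rw [h, ha0, neg_zero]

/-- `kv` extended to all of `ℕ` by zero. -/
def extk {m : ℕ} (kv : Fin m → ℕ) : ℕ → ℕ := fun t => if h : t < m then kv ⟨t, h⟩ else 0

/-- Partial sums `k_1 + ⋯ + k_j`. -/
def psum {m : ℕ} (kv : Fin m → ℕ) (j : ℕ) : ℕ := ∑ t ∈ Finset.range j, extk kv t

/-- `G` is a generator matrix in standard form of type `(k_1, …, k_m)`. -/
def StandardForm {N : ℕ} {m n : ℕ} (kv : Fin m → ℕ)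
    (G : Fin (psum kv m) → Fin n → ZMod N) : Prop :=
  psum kv m ≤ n ∧
  ∀ (j : Fin m) (r : Fin (psum kv m)), psum kv (j : ℕ) ≤ (r : ℕ) → (r : ℕ) < psum kv ((j : ℕ) + 1) →
    ∀ c : Fin n,
      (∀ l : Fin m, psum kv (l : ℕ) ≤ (c : ℕ) → (c : ℕ) < psum kv ((l : ℕ) + 1) →
        (l < j → G r c = 0) ∧
        (l = j → G r c = if (r : ℕ) = (c : ℕ) then (2 ^ (j : ℕ) : ZMod N) else 0)) ∧
      ((psum kv m ≤ (c : ℕ) ∨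
        ∃ l : Fin m, j < l ∧ psum kv (l : ℕ) ≤ (c : ℕ) ∧ (c : ℕ) < psum kv ((l : ℕ) + 1)) →
        ∃ a : ZMod N, G r c = 2 ^ (j : ℕ) * a)

/-- The minimum Euclidean weight over nonzero codewords equals `d`. -/
def minEuclWtIs {N n : ℕ} (C : AddSubgroup (Fin n → ZMod N)) (d : ℕ) : Prop :=
  (∀ x ∈ C, x ≠ 0 → d ≤ euclWt x) ∧ ∃ x ∈ C, x ≠ 0 ∧ euclWt x = d

/-- Coordinatewise reduction modulo 4. -/
def res4 {n : ℕ} : (Fin n → ZMod 8) →+ (Fin n → ZMod 4) where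
  toFun := fun x i => ZMod.castHom (by norm_num : (4 : ℕ) ∣ 8) (ZMod 4) (x i)
  map_zero' := by ext i; simp
  map_add' := by intro a b; ext i; exact map_add (ZMod.castHom (by norm_num) _) _ _

/-- Coordinatewise reduction modulo 2. -/
def res2 {n : ℕ} : (Fin n → ZMod 8) →+ (Fin n → ZMod 2) where
  toFun := fun x i => ZMod.castHom (by norm_num : (2 : ℕ) ∣ 8) (ZMod 2) (x i)
  map_zero' := by ext i; simp
  map_add' := by intro a b; ext i; exact map_add (ZMod.castHom (by norm_num) _) _ _

/-- Hamming weight of a binary vector. -/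
def hammingWt {n : ℕ} (y : Fin n → ZMod 2) : ℕ :=
  (Finset.univ.filter fun i => y i ≠ 0).card

/-- Equivalence of codes: a permutation of coordinates combined with sign changes. -/
def codeEquiv {N n : ℕ} (C C' : AddSubgroup (Fin n → ZMod N)) : Prop :=
  ∃ (σ : Equiv.Perm (Fin n)) (ε : Fin n → ZMod N),
    (∀ i, ε i = 1 ∨ ε i = -1) ∧
    ∀ y, y ∈ C' ↔ ∃ x ∈ C, y = fun i => ε i * x (σ i)

section DoublingAux

open Finset

lemma innerZ_comm' {N n : ℕ} (x y : Fin n → ZMod N) : innerZ x y = innerZ y x := by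
  simp [innerZ, mul_comm]

lemma innerZ_add_right' {N n : ℕ} (x y z : Fin n → ZMod N) :
    innerZ x (y + z) = innerZ x y + innerZ x z := by
  simp [innerZ, mul_add, Finset.sum_add_distrib]

lemma innerZ_add_left' {N n : ℕ} (x y z : Fin n → ZMod N) :
    innerZ (x + y) z = innerZ x z + innerZ y z := by
  simp [innerZ, add_mul, Finset.sum_add_distrib]

lemma innerZ_sub_left' {N n : ℕ} (x y z : Fin n → ZMod N) :
    innerZ (x - y) z = innerZ x z - innerZ y z := by
  simp [innerZ, sub_mul, Finset.sum_sub_distrib]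

lemma innerZ_sub_right' {N n : ℕ} (x y z : Fin n → ZMod N) :
    innerZ x (y - z) = innerZ x y - innerZ x z := by
  simp [innerZ, mul_sub, Finset.sum_sub_distrib]

lemma mem_evenPart' {N n : ℕ} {C : AddSubgroup (Fin n → ZMod N)} {w v : Fin n → ZMod N} :
    v ∈ evenPart C w ↔ v ∈ C ∧ innerZ w v = 0 := Iff.rfl

lemma pointwise_nat' (k a : ℕ) (hk : 1 ≤ k) (ha : a < 2*k) :
    min (((a+k) % (2*k))^2) ((2*k - (a+k) % (2*k))^2) + 2*k * (min a (2*k - a))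
      = min (a^2) ((2*k-a)^2) + k^2 := by
  rcases lt_or_ge a k with h | h
  · have hb : (a+k) % (2*k) = a + k := Nat.mod_eq_of_lt (by omega)
    rw [hb, Nat.min_eq_right (Nat.pow_le_pow_left (by omega) 2),
        Nat.min_eq_left (by omega), Nat.min_eq_left (Nat.pow_le_pow_left (by omega) 2)]
    zify [show a ≤ k from le_of_lt h, show a + k ≤ 2*k from by omega]
    ring
  · have hb : (a+k) % (2*k) = a - k := by
      rw [show a + k = (a - k) + 2*k from by omega, Nat.add_mod_right]
      exact Nat.mod_eq_of_lt (by omega)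
    rw [hb, Nat.min_eq_left (Nat.pow_le_pow_left (by omega) 2),
        Nat.min_eq_right (by omega), Nat.min_eq_right (Nat.pow_le_pow_left (by omega) 2)]
    zify [show k ≤ a from h, show a ≤ 2*k from le_of_lt ha, show a - k ≤ 2*k from by omega]
    ring

lemma val_add_k' {k : ℕ} (hk : 2 ≤ k) (x : ZMod (2*k)) :
    (x + (k : ZMod (2*k))).val = (x.val + k) % (2*k) := by
  haveI : NeZero (2*k) := ⟨by omega⟩
  conv_lhs => rw [show x = ((x.val : ℕ) : ZMod (2*k)) from by simp [ZMod.natCast_val, ZMod.cast_id]]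
  rw [← Nat.cast_add, ZMod.val_natCast]

lemma inner_w_eq' {k n : ℕ} (w : Fin n → ZMod (2*k))
    (hcoord : ∀ i, w i = 0 ∨ w i = (k : ZMod (2*k))) (y : Fin n → ZMod (2*k)) :
    innerZ w y = (k : ZMod (2*k)) * ∑ i ∈ univ.filter (fun i => w i = (k : ZMod (2*k))), y i := by
  classical
  rw [innerZ, ← Finset.sum_filter_add_sum_filter_not univ (fun i => w i = (k : ZMod (2*k)))
      (fun i => w i * y i)]
  have h1 : ∑ i ∈ univ.filter (fun i => ¬ w i = (k : ZMod (2*k))), w i * y i = 0 := by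
    apply Finset.sum_eq_zero
    intro i hi
    have := (Finset.mem_filter.mp hi).2
    rcases hcoord i with h0 | h0
    · rw [h0, zero_mul]
    · exact absurd h0 this
  rw [h1, add_zero, Finset.mul_sum]
  apply Finset.sum_congr rfl
  intro i hi
  rw [(Finset.mem_filter.mp hi).2]

lemma two_mul_zero_cases' {k : ℕ} (hk : 2 ≤ k) (c : ZMod (2*k)) (h2 : 2 * c = 0) :
    c = 0 ∨ c = (k : ZMod (2*k)) := by
  haveI : NeZero (2*k) := ⟨by omega⟩
  have hc : c = ((c.val : ℕ) : ZMod (2*k)) := by simp [ZMod.natCast_val, ZMod.cast_id]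
  have h2' : ((2 * c.val : ℕ) : ZMod (2*k)) = 0 := by push_cast; rw [← hc]; exact h2
  obtain ⟨t, ht⟩ := (ZMod.natCast_eq_zero_iff _ _).mp h2'
  have hvl : c.val < 2*k := ZMod.val_lt c
  have hvt : c.val = k * t := by
    have : 2 * c.val = 2 * (k * t) := by rw [ht]; ring
    exact Nat.eq_of_mul_eq_mul_left (by norm_num) this
  have ht2 : t < 2 := by
    by_contra hcon
    push_neg at hcon
    have : 2 * k ≤ k * t := by
      calc 2*k = k*2 := by ring
        _ ≤ k*t := Nat.mul_le_mul_left k hcon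
    omega
  interval_cases t
  · left; rw [← ZMod.val_eq_zero]; omega
  · right; rw [hc, hvt]; norm_num

lemma two_innerZ_w' {k n : ℕ} (hk : 2 ≤ k) (w : Fin n → ZMod (2*k))
    (hcoord : ∀ i, w i = 0 ∨ w i = (k : ZMod (2*k))) (y : Fin n → ZMod (2*k)) :
    2 * innerZ w y = 0 := by
  rw [inner_w_eq' w hcoord y]
  have h : (2 : ZMod (2*k)) * (k : ZMod (2*k)) = 0 := by
    rw [show (2 : ZMod (2*k)) = ((2:ℕ) : ZMod (2*k)) from by push_cast; ring,
        ← Nat.cast_mul, ZMod.natCast_self]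
  rw [← mul_assoc, h, zero_mul]

lemma w_add_w' {k n : ℕ} (w : Fin n → ZMod (2*k))
    (hcoord : ∀ i, w i = 0 ∨ w i = (k : ZMod (2*k))) : w + w = 0 := by
  funext i
  rcases hcoord i with h | h <;> simp only [Pi.add_apply, Pi.zero_apply, h]
  · rw [add_zero]
  · rw [← Nat.cast_add, show k + k = 2*k from by ring, ZMod.natCast_self]

lemma mem_closure_w' {k n : ℕ} {w : Fin n → ZMod (2*k)} (hww : w + w = 0)
    {x : Fin n → ZMod (2*k)} (hx : x ∈ AddSubgroup.closure {w}) : x = 0 ∨ x = w := by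
  have hnw : -w = w := neg_eq_of_add_eq_zero_left hww
  induction hx using AddSubgroup.closure_induction with
  | mem x hx => right; exact hx
  | zero => left; rfl
  | add a b _ _ ha hb =>
      rcases ha with h | h <;> rcases hb with h' | h' <;> subst h <;> subst h' <;>
        simp_all [hww]
  | neg a _ ha => rcases ha with h | h <;> subst h <;> simp_all [hnw]

lemma wt_key' {k n : ℕ} (hk : 2 ≤ k) (w v : Fin n → ZMod (2*k))
    (hcoord : ∀ i, w i = 0 ∨ w i = (k : ZMod (2*k))) :
    euclWt (v + w) +
      2*k * (∑ i ∈ univ.filter (fun i => w i = (k : ZMod (2*k))),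
        min ((v i).val) (2*k - (v i).val))
    = euclWt v + cntEq (k : ZMod (2*k)) w * k^2 := by
  classical
  haveI : NeZero (2*k) := ⟨by omega⟩
  unfold euclWt cntEq
  rw [← Finset.sum_filter_add_sum_filter_not univ (fun i => w i = (k : ZMod (2*k)))
        (fun i => min (((v+w) i).val^2) ((2*k - ((v+w) i).val)^2)),
      ← Finset.sum_filter_add_sum_filter_not univ (fun i => w i = (k : ZMod (2*k)))
        (fun i => min ((v i).val^2) ((2*k - (v i).val)^2))]
  have hnot : ∑ i ∈ univ.filter (fun i => ¬ w i = (k : ZMod (2*k))),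
        min (((v+w) i).val^2) ((2*k - ((v+w) i).val)^2)
      = ∑ i ∈ univ.filter (fun i => ¬ w i = (k : ZMod (2*k))),
        min ((v i).val^2) ((2*k - (v i).val)^2) := by
    apply Finset.sum_congr rfl
    intro i hi
    have hw0 : w i = 0 := by
      rcases hcoord i with h | h
      · exact h
      · exact absurd h (Finset.mem_filter.mp hi).2
    simp [Pi.add_apply, hw0]
  have hmain : ∑ i ∈ univ.filter (fun i => w i = (k : ZMod (2*k))),
        (min (((v+w) i).val^2) ((2*k - ((v+w) i).val)^2)
          + 2*k * (min ((v i).val) (2*k - (v i).val)))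
      = ∑ i ∈ univ.filter (fun i => w i = (k : ZMod (2*k))),
        (min ((v i).val^2) ((2*k - (v i).val)^2) + k^2) := by
    apply Finset.sum_congr rfl
    intro i hi
    have hwi : w i = (k : ZMod (2*k)) := (Finset.mem_filter.mp hi).2
    have hvw : (v + w) i = v i + (k : ZMod (2*k)) := by simp [Pi.add_apply, hwi]
    rw [hvw, val_add_k' hk]
    exact pointwise_nat' k (v i).val (by omega) (ZMod.val_lt (v i))
  rw [Finset.sum_add_distrib, Finset.sum_add_distrib, ← Finset.mul_sum,
      Finset.sum_const, smul_eq_mul] at hmain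
  omega

lemma S_even' {k n : ℕ} (hk : 2 ≤ k) (w v : Fin n → ZMod (2*k))
    (hcoord : ∀ i, w i = 0 ∨ w i = (k : ZMod (2*k))) (h0 : innerZ w v = 0) :
    2 ∣ ∑ i ∈ univ.filter (fun i => w i = (k : ZMod (2*k))),
        min ((v i).val) (2*k - (v i).val) := by
  classical
  haveI : NeZero (2*k) := ⟨by omega⟩
  set T : ℕ := ∑ i ∈ univ.filter (fun i => w i = (k : ZMod (2*k))), (v i).val with hT
  have hcast : (∑ i ∈ univ.filter (fun i => w i = (k : ZMod (2*k))), v i)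
      = ((T : ℕ) : ZMod (2*k)) := by
    rw [hT, Nat.cast_sum]
    apply Finset.sum_congr rfl
    intro i _
    simp [ZMod.natCast_val, ZMod.cast_id]
  have h1 : ((k * T : ℕ) : ZMod (2*k)) = 0 := by
    push_cast
    rw [← hcast, ← inner_w_eq' w hcoord v]
    exact h0
  obtain ⟨c, hc⟩ := (ZMod.natCast_eq_zero_iff _ _).mp h1
  have hTc : T = 2 * c := by
    have : k * T = k * (2 * c) := by rw [hc]; ring
    exact Nat.eq_of_mul_eq_mul_left (by omega) this
  have hmod : (∑ i ∈ univ.filter (fun i => w i = (k : ZMod (2*k))),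
      min ((v i).val) (2*k - (v i).val)) % 2 = T % 2 := by
    rw [hT, Finset.sum_nat_mod, Finset.sum_nat_mod _ 2 (fun i => (v i).val)]
    congr 1
    apply Finset.sum_congr rfl
    intro i _
    have hvl : (v i).val < 2*k := ZMod.val_lt (v i)
    rcases le_total ((v i).val) (2*k - (v i).val) with h | h
    · rw [Nat.min_eq_left h]
    · rw [Nat.min_eq_right h]; omega
  omega

end DoublingAux

/-- the doubling method produces a Type II `Z_{2k}`-code,
i.e. the code `C̃ = C₀ ⊕ ⟨w⟩` is self-dual and all its Euclidean weights are
divisible by `4k`. -/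
theorem doubling_typeII {k n : ℕ} (hk : 2 ≤ k)
    (C : AddSubgroup (Fin n → ZMod (2 * k)))
    (hsd : IsSelfDual C) (hT2 : ∀ x ∈ C, 4 * k ∣ euclWt x)
    (w : Fin n → ZMod (2 * k)) (hwC : w ∉ C)
    (hcoord : ∀ i, w i = 0 ∨ w i = (k : ZMod (2 * k)))
    (hodd : Odd k → 4 ∣ cntEq (k : ZMod (2 * k)) w)
    (heven : Even k → ¬ (4 ∣ k) → 2 ∣ cntEq (k : ZMod (2 * k)) w) :
    IsSelfDual (evenPart C w ⊔ AddSubgroup.closure {w}) ∧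
    ∀ x ∈ evenPart C w ⊔ AddSubgroup.closure {w}, 4 * k ∣ euclWt x := by
  classical
  haveI : NeZero (2*k) := ⟨by omega⟩
  have hww0 : w + w = 0 := w_add_w' w hcoord
  have hwcl : w ∈ AddSubgroup.closure {w} := AddSubgroup.subset_closure rfl
  have h4 : 4 ∣ cntEq (k : ZMod (2*k)) w * k := by
    rcases Nat.even_or_odd k with he | ho
    · by_cases h4k : 4 ∣ k
      · exact Dvd.dvd.mul_left h4k _
      · obtain ⟨a, ha⟩ := heven he h4k
        obtain ⟨b, hb⟩ := he
        exact ⟨a * b, by rw [ha, hb]; ring⟩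
    · obtain ⟨a, ha⟩ := hodd ho
      exact ⟨a * k, by rw [ha]; ring⟩
  have h2cnt : 2 ∣ cntEq (k : ZMod (2*k)) w * k := dvd_trans ⟨2, rfl⟩ h4
  have hwworth : innerZ w w = 0 := by
    rw [inner_w_eq' w hcoord w]
    have hsum : ∑ i ∈ Finset.univ.filter (fun i => w i = (k : ZMod (2*k))), w i
        = (cntEq (k : ZMod (2*k)) w) • (k : ZMod (2*k)) := by
      rw [cntEq, ← Finset.sum_const]
      apply Finset.sum_congr rfl
      intro i hi
      exact (Finset.mem_filter.mp hi).2
    rw [hsum, nsmul_eq_mul,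
      show (k : ZMod (2*k)) * ((cntEq (k : ZMod (2*k)) w : ℕ) * (k : ZMod (2*k)))
        = ((k * (cntEq (k : ZMod (2*k)) w * k) : ℕ) : ZMod (2*k)) from by push_cast; ring,
      ZMod.natCast_eq_zero_iff]
    obtain ⟨m, hm⟩ := h2cnt
    exact ⟨m, by rw [hm]; ring⟩
  have memT : ∀ x : Fin n → ZMod (2*k),
      x ∈ evenPart C w ⊔ AddSubgroup.closure {w} ↔
        x ∈ evenPart C w ∨ ∃ v ∈ evenPart C w, x = v + w := by
    intro x
    constructor
    · intro hx
      obtain ⟨y, hy, z, hz, hyz⟩ := AddSubgroup.mem_sup.mp hx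
      rcases mem_closure_w' hww0 hz with h | h
      · left; rw [← hyz, h, add_zero]; exact hy
      · right; exact ⟨y, hy, by rw [← hyz, h]⟩
    · rintro (hx | ⟨v, hv, rfl⟩)
      · exact AddSubgroup.mem_sup_left hx
      · exact AddSubgroup.add_mem _ (AddSubgroup.mem_sup_left hv)
          (AddSubgroup.mem_sup_right hwcl)
  constructor
  · -- self-duality
    intro x
    constructor
    · intro hx y hy
      have hx' := (memT x).mp hx
      have hy' := (memT y).mp hy
      have base : ∀ u ∈ evenPart C w, ∀ u' ∈ evenPart C w, innerZ u u' = 0 := by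
        intro u hu u' hu'
        exact ((hsd u).mp (mem_evenPart'.mp hu).1) u' (mem_evenPart'.mp hu').1
      have buw : ∀ u ∈ evenPart C w, innerZ u w = 0 := by
        intro u hu
        rw [innerZ_comm']
        exact (mem_evenPart'.mp hu).2
      rcases hx' with hx0 | ⟨u, hu, rfl⟩ <;> rcases hy' with hy0 | ⟨u', hu', rfl⟩
      · exact base _ hx0 _ hy0
      · rw [innerZ_add_right', base _ hx0 _ hu', buw _ hx0, add_zero]
      · rw [innerZ_add_left', base _ hu _ hy0, innerZ_comm' w, buw _ hy0, add_zero]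
      · rw [innerZ_add_left', innerZ_add_right', innerZ_add_right',
          base _ hu _ hu', buw _ hu, innerZ_comm' w u', buw _ hu', hwworth]
        simp
    · intro hall
      have hex : ∃ v, v ∈ C ∧ innerZ w v ≠ 0 := by
        by_contra hcon
        push_neg at hcon
        exact hwC ((hsd w).mpr fun y hy => hcon y hy)
      obtain ⟨v0, hv0C, hv0ne⟩ := hex
      have hwv0 : innerZ w v0 = (k : ZMod (2*k)) :=
        (two_mul_zero_cases' hk _ (two_innerZ_w' hk w hcoord v0)).resolve_left hv0ne
      have hKK : (k : ZMod (2*k)) + (k : ZMod (2*k)) = 0 := by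
        rw [← Nat.cast_add, show k + k = 2*k from by ring, ZMod.natCast_self]
      have hxev : ∀ u ∈ evenPart C w, innerZ x u = 0 :=
        fun u hu => hall u (AddSubgroup.mem_sup_left hu)
      have hxw : innerZ x w = 0 := hall w (AddSubgroup.mem_sup_right hwcl)
      have h2v0 : v0 + v0 ∈ evenPart C w := by
        refine mem_evenPart'.mpr ⟨C.add_mem hv0C hv0C, ?_⟩
        rw [innerZ_add_right', hwv0]
        exact hKK
      have hc2 : 2 * innerZ x v0 = 0 := by
        have h := hxev _ h2v0
        rw [innerZ_add_right'] at h
        linear_combination h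
      have hCfull : ∀ z : Fin n → ZMod (2*k), (∀ u ∈ evenPart C w, innerZ z u = 0) →
          innerZ z v0 = 0 → z ∈ C := by
        intro z hz hzv0
        apply (hsd z).mpr
        intro y hyC
        by_cases hy0 : innerZ w y = 0
        · exact hz y (mem_evenPart'.mpr ⟨hyC, hy0⟩)
        · have hyk : innerZ w y = (k : ZMod (2*k)) :=
            (two_mul_zero_cases' hk _ (two_innerZ_w' hk w hcoord y)).resolve_left hy0
          have hmem : y - v0 ∈ evenPart C w := by
            refine mem_evenPart'.mpr ⟨C.sub_mem hyC hv0C, ?_⟩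
            rw [innerZ_sub_right', hyk, hwv0, sub_self]
          have h := hz _ hmem
          rw [innerZ_sub_right', hzv0, sub_zero] at h
          exact h
      rcases two_mul_zero_cases' hk _ hc2 with hc | hc
      · have hxC : x ∈ C := hCfull x hxev hc
        refine AddSubgroup.mem_sup_left (mem_evenPart'.mpr ⟨hxC, ?_⟩)
        rw [innerZ_comm']
        exact hxw
      · have hx'ev : ∀ u ∈ evenPart C w, innerZ (x - w) u = 0 := by
          intro u hu
          rw [innerZ_sub_left', hxev u hu, (mem_evenPart'.mp hu).2, sub_zero]
        have hx'v0 : innerZ (x - w) v0 = 0 := by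
          rw [innerZ_sub_left', hc, hwv0, sub_self]
        have hx'C : x - w ∈ C := hCfull _ hx'ev hx'v0
        have hx'0 : innerZ w (x - w) = 0 := by
          rw [innerZ_sub_right', hwworth, sub_zero, innerZ_comm']
          exact hxw
        have hmem : (x - w) + w ∈ evenPart C w ⊔ AddSubgroup.closure {w} :=
          AddSubgroup.add_mem _
            (AddSubgroup.mem_sup_left (mem_evenPart'.mpr ⟨hx'C, hx'0⟩))
            (AddSubgroup.mem_sup_right hwcl)
        simpa [sub_add_cancel] using hmem
  · -- Euclidean weights
    intro x hx
    rcases (memT x).mp hx with hx0 | ⟨v, hv, rfl⟩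
    · exact hT2 x (mem_evenPart'.mp hx0).1
    · obtain ⟨hvC, hv0⟩ := mem_evenPart'.mp hv
      have hkey := wt_key' hk w v hcoord
      obtain ⟨s, hs⟩ := S_even' hk w v hcoord hv0
      have hd1 : 4*k ∣ 2*k * (∑ i ∈ Finset.univ.filter (fun i => w i = (k : ZMod (2*k))),
          min ((v i).val) (2*k - (v i).val)) := ⟨s, by rw [hs]; ring⟩
      have hd2 : 4*k ∣ cntEq (k : ZMod (2*k)) w * k^2 := by
        obtain ⟨m, hm⟩ := h4
        exact ⟨m, by rw [show cntEq (k : ZMod (2*k)) w * k^2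
          = (cntEq (k : ZMod (2*k)) w * k) * k from by ring, hm]; ring⟩
      have hdsum : 4*k ∣ euclWt (v + w) + 2*k *
          (∑ i ∈ Finset.univ.filter (fun i => w i = (k : ZMod (2*k))),
            min ((v i).val) (2*k - (v i).val)) := by
        rw [hkey]
        exact dvd_add (hT2 v hvC) hd2
      have hfin := Nat.dvd_sub hdsum hd1
      simpa using hfin
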